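/- The complex soft-thresholding operator solves the complex LASSO problem: for any y ∈ ℂ and τ ≥ 0, the point h* = (y/|y|)·max(|y|−τ, 0) (with h* = 0 when y = 0) is the unique minimizer over h ∈ ℂ of the function f(h) = (1/2)|y − h|² + τ|h|. -/

import Mathlib

/-- Complex soft-thresholding operator, with the convention `y/|y| = 0` for `y = 0`. -/
noncomputable def eta (τ : ℝ) (y : ℂ) : ℂ :=
  (y / (‖y‖ : ℂ)) * ((max (‖y‖ - τ) 0 : ℝ) : ℂ)

lemma abs_eta (τ : ℝ) (y : ℂ) (hτ : 0 ≤ τ) :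
    ‖eta τ y‖ = max (‖y‖ - τ) 0 := by
  rcases eq_or_ne y 0 with rfl | hy
  · simp only [eta, map_zero, norm_zero, Complex.ofReal_zero, zero_div, zero_mul]
    rw [zero_sub, eq_comm, max_eq_right (neg_nonpos.mpr hτ)]
  · have ha : ‖y‖ ≠ 0 := by simpa using hy
    rw [eta, norm_mul, norm_div, Complex.norm_real, Complex.norm_real, Real.norm_eq_abs, Real.norm_eq_abs,
      abs_of_nonneg (norm_nonneg y),
      abs_of_nonneg (le_max_right (‖y‖ - τ) 0),
      div_self ha, one_mul]

lemma key_ineq (y : ℂ) (τ : ℝ) (hτ : 0 ≤ τ) (h : ℂ) :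
    ((starRingEnd ℂ) (y - eta τ y) * (h - eta τ y)).re
      ≤ τ * ‖h‖ - τ * ‖eta τ y‖ := by
  rcases eq_or_ne y 0 with rfl | hy
  · simp [eta]
    positivity
  · set a := ‖y‖ with ha
    have ha0 : 0 < a := norm_pos_iff.mpr hy
    set m := max (a - τ) 0 with hm
    have hm0 : 0 ≤ m := le_max_right _ _
    have hτm : (a - m) * m = τ * m := by
      rcases le_or_gt (a - τ) 0 with h1 | h1
      · rw [hm, max_eq_right h1]; ring
      · rw [hm, max_eq_left h1.le]; ring
    have ham : a - m ≤ τ := by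
      rcases le_or_gt (a - τ) 0 with h1 | h1
      · rw [hm, max_eq_right h1]; linarith
      · rw [hm, max_eq_left h1.le]; linarith
    have hca : (a : ℂ) ≠ 0 := by exact_mod_cast ha0.ne'
    have hye : y - eta τ y = (((a - m) / a : ℝ) : ℂ) * y := by
      rw [eta, ← ha, ← hm]
      push_cast
      field_simp
    have hconj : (starRingEnd ℂ) y * eta τ y = ((a * m : ℝ) : ℂ) := by
      rw [eta, ← ha, ← hm]
      have h1 : (starRingEnd ℂ) y * y = ((a ^ 2 : ℝ) : ℂ) := by
        rw [mul_comm, Complex.mul_conj, Complex.normSq_eq_norm_sq, ← ha]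
      field_simp
      push_cast at h1 ⊢
      linear_combination (m : ℂ) * h1
    have hre : ((starRingEnd ℂ) (y - eta τ y) * (h - eta τ y)).re
        = ((a - m) / a) * (((starRingEnd ℂ) y * h).re - a * m) := by
      rw [hye, map_mul, Complex.conj_ofReal, mul_assoc, Complex.re_ofReal_mul]
      congr 1
      rw [mul_sub, hconj, Complex.sub_re, Complex.ofReal_re]
    have h1 : ((starRingEnd ℂ) y * h).re ≤ a * ‖h‖ := by
      calc ((starRingEnd ℂ) y * h).re ≤ ‖(starRingEnd ℂ) y * h‖ :=
            Complex.re_le_norm _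
        _ = a * ‖h‖ := by rw [norm_mul, Complex.norm_conj]
    have hr0 : 0 ≤ (a - m) / a := by
      apply div_nonneg _ ha0.le
      have : a - τ ≤ m := le_max_left _ _
      have : (0:ℝ) ≤ m := hm0
      rcases le_or_gt (a - τ) 0 with h2 | h2
      · rw [hm, max_eq_right h2]; linarith
      · rw [hm, max_eq_left h2.le]; linarith
    have hra : ((a - m) / a) * a = a - m := by field_simp
    rw [hre, abs_eta τ y hτ, ← hm]
    have habs : 0 ≤ ‖h‖ := norm_nonneg h
    nlinarith [mul_le_mul_of_nonneg_left h1 hr0,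
      mul_le_mul_of_nonneg_right ham habs]

/-- The complex soft-thresholding operator is the unique minimizer of the
complex LASSO objective `f(h) = (1/2)|y - h|² + τ|h|`. -/
theorem softThresholding_unique_minimizer (y : ℂ) (τ : ℝ) (hτ : 0 ≤ τ) :
    ∀ h : ℂ,
      (1/2) * ‖y - eta τ y‖ ^ 2 + τ * ‖eta τ y‖
        ≤ (1/2) * ‖y - h‖ ^ 2 + τ * ‖h‖ ∧
      (h ≠ eta τ y →
        (1/2) * ‖y - eta τ y‖ ^ 2 + τ * ‖eta τ y‖
          < (1/2) * ‖y - h‖ ^ 2 + τ * ‖h‖) := by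
  intro h
  set e := eta τ y with he
  have expand : (1/2) * ‖y - h‖ ^ 2
      = (1/2) * ‖y - e‖ ^ 2
        - ((starRingEnd ℂ) (y - e) * (h - e)).re
        + (1/2) * ‖h - e‖ ^ 2 := by
    simp only [Complex.sq_norm, Complex.normSq_apply, Complex.mul_re, Complex.sub_re,
      Complex.sub_im, Complex.conj_re, Complex.conj_im]
    ring
  have hkey := key_ineq y τ hτ h
  constructor
  · have hsq : 0 ≤ (1/2) * ‖h - e‖ ^ 2 := by positivity
    rw [expand]; linarith
  · intro hne
    have hsq : 0 < (1/2) * ‖h - e‖ ^ 2 := by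
      have : h - e ≠ 0 := sub_ne_zero.mpr hne
      have := norm_pos_iff.mpr this
      positivity
    rw [expand]; linarith
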